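/- Let A, V, Z, C ∈ M_m(ℝ) with C invertible, and define L(t) = exp(−A·t/2)·C·exp(V·t/2) for t ≥ 0 (so that L(2t) = exp(−At)C exp(Vt)). Then the commutation identity [Z, L(t)C⁻¹] = 0 holds for all t ≥ 0 if and only if {Z A^(n) (CVC⁻¹ − A)} = 0 for every integer n ≥ 0. -/

import Mathlib

open Matrix NormedSpace

/-- The iterated commutator `{Z A^(n)}`: `{Z A^(0)} = Z`,
`{Z A^(n+1)} = [{Z A^(n)}, A]` where `[X, Y] = X*Y - Y*X`. -/
def itComm {m : ℕ} (Z A : Matrix (Fin m) (Fin m) ℝ) : ℕ → Matrix (Fin m) (Fin m) ℝ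
  | 0 => Z
  | n + 1 => itComm Z A n * A - A * itComm Z A n

namespace Stmt11Aux

variable {𝔸 : Type*}

/-- abstract iterated commutator: `adIt A Z n = {Z A^(n)}` -/
def adIt [Ring 𝔸] (A Z : 𝔸) : ℕ → 𝔸
  | 0 => Z
  | n + 1 => adIt A Z n * A - A * adIt A Z n

theorem itComm_eq_adIt {m : ℕ} (Z A : Matrix (Fin m) (Fin m) ℝ) (n : ℕ) :
    itComm Z A n = adIt A Z n := by
  induction n with
  | zero => rfl
  | succ n ih => simp [itComm, adIt, ih]

theorem adIt_shift [Ring 𝔸] (A B : 𝔸) : ∀ k, adIt A (B * A - A * B) k = adIt A B (k + 1)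
  | 0 => rfl
  | k + 1 => by simp only [adIt, adIt_shift A B k]

theorem shuffle [Ring 𝔸] (A Z : 𝔸) :
    ∀ (n : ℕ) (B : 𝔸), (∀ k, Z * adIt A B k - adIt A B k * Z = 0) →
      adIt A Z n * B - B * adIt A Z n = 0
  | 0, B, h => h 0
  | n + 1, B, h => by
    have h1 := shuffle A Z n B h
    have h2 := shuffle A Z n (B * A - A * B)
      (fun k => by rw [adIt_shift]; exact h (k + 1))
    have key : adIt A Z (n + 1) * B - B * adIt A Z (n + 1)
        = ((adIt A Z n * B - B * adIt A Z n) * A - A * (adIt A Z n * B - B * adIt A Z n))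
          - (adIt A Z n * (B * A - A * B) - (B * A - A * B) * adIt A Z n) := by
      show (adIt A Z n * A - A * adIt A Z n) * B - B * (adIt A Z n * A - A * adIt A Z n) = _
      noncomm_ring
    rw [key, h1, h2]
    simp

section Banach

variable [NormedRing 𝔸] [NormedAlgebra ℝ 𝔸] [CompleteSpace 𝔸]

noncomputable instance instNormedAlgebraRatAux : NormedAlgebra ℚ 𝔸 :=
  NormedAlgebra.restrictScalars ℚ ℝ 𝔸

theorem exp_mul_exp_neg (x : 𝔸) : exp x * exp (-x) = 1 := by
  rw [← exp_add_of_commute ((Commute.refl x).neg_right)]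
  simp

theorem exp_neg_mul_exp (x : 𝔸) : exp (-x) * exp x = 1 := by
  rw [← exp_add_of_commute ((Commute.refl x).neg_left)]
  simp

/-- left multiplication as a ring hom into CLMs -/
noncomputable def mulLeftRH : 𝔸 →+* (𝔸 →L[ℝ] 𝔸) where
  toFun a := ContinuousLinearMap.mul ℝ 𝔸 a
  map_one' := by ext x; simp
  map_mul' a b := by ext x; simp [mul_assoc]
  map_zero' := by ext x; simp
  map_add' a b := by ext x; simp [add_mul]

/-- right multiplication as a ring hom from the opposite algebra into CLMs -/
noncomputable def mulRightRH : 𝔸ᵐᵒᵖ →+* (𝔸 →L[ℝ] 𝔸) where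
  toFun a := (ContinuousLinearMap.mul ℝ 𝔸).flip a.unop
  map_one' := by ext x; simp
  map_mul' a b := by ext x; simp [mul_assoc]
  map_zero' := by ext x; simp
  map_add' a b := by ext x; simp [mul_add]

theorem exp_mulLeft (a : 𝔸) :
    exp (ContinuousLinearMap.mul ℝ 𝔸 a) = ContinuousLinearMap.mul ℝ 𝔸 (exp a) :=
  (map_exp (mulLeftRH (𝔸 := 𝔸)) (ContinuousLinearMap.mul ℝ 𝔸).continuous a).symm

theorem exp_mulRight (a : 𝔸) :
    exp ((ContinuousLinearMap.mul ℝ 𝔸).flip a) = (ContinuousLinearMap.mul ℝ 𝔸).flip (exp a) := by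
  have hc : Continuous (mulRightRH (𝔸 := 𝔸)) :=
    ((ContinuousLinearMap.mul ℝ 𝔸).flip.continuous).comp MulOpposite.continuous_unop
  have h := map_exp (mulRightRH (𝔸 := 𝔸)) hc (MulOpposite.op a)
  rw [exp_op] at h
  simpa [mulRightRH] using h.symm

theorem conj_exp_apply (a Z : 𝔸) :
    exp (ContinuousLinearMap.mul ℝ 𝔸 a + (ContinuousLinearMap.mul ℝ 𝔸).flip (-a)) Z
      = exp a * Z * exp (-a) := by
  have hcomm : Commute (ContinuousLinearMap.mul ℝ 𝔸 a)
      ((ContinuousLinearMap.mul ℝ 𝔸).flip (-a)) := by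
    apply ContinuousLinearMap.ext
    intro x
    simp [ContinuousLinearMap.mul_apply, mul_assoc]
  rw [exp_add_of_commute hcomm, exp_mulLeft, exp_mulRight]
  simp [mul_assoc]

/-- If all iterated commutators of `Z` with `A` commute with `B`, then so does
`exp(sA) Z exp(-sA)`. -/
theorem lemma1 (A B Z : 𝔸) (h : ∀ n, adIt A Z n * B - B * adIt A Z n = 0) (s : ℝ) :
    (exp (s • A) * Z * exp (-(s • A))) * B - B * (exp (s • A) * Z * exp (-(s • A))) = 0 := by
  set T : 𝔸 →L[ℝ] 𝔸 :=
    ContinuousLinearMap.mul ℝ 𝔸 (s • A) + (ContinuousLinearMap.mul ℝ 𝔸).flip (-(s • A)) with hT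
  have hTapp : ∀ X : 𝔸, T X = (-s) • (X * A - A * X) := by
    intro X
    simp only [hT, ContinuousLinearMap.add_apply, ContinuousLinearMap.mul_apply',
      ContinuousLinearMap.flip_apply, smul_mul_assoc, mul_smul_comm, mul_neg, smul_neg,
      neg_smul, smul_sub]
    abel
  have hTn : ∀ n, (T ^ n) Z = ((-s) ^ n : ℝ) • adIt A Z n := by
    intro n
    induction n with
    | zero => simp [adIt]
    | succ n ih =>
      rw [pow_succ', ContinuousLinearMap.mul_apply, ih, T.map_smul, hTapp, smul_smul,
        mul_comm ((-s) ^ n) (-s), ← pow_succ']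
      rfl
  have hTZB : ∀ n : ℕ,
      ((n.factorial⁻¹ : ℝ) • (T ^ n) Z) * B - B * ((n.factorial⁻¹ : ℝ) • (T ^ n) Z) = 0 := by
    intro n
    rw [hTn, smul_smul]
    rw [smul_mul_assoc, mul_smul_comm, ← smul_sub, h n, smul_zero]
  have hsum : Summable fun n : ℕ => (n.factorial⁻¹ : ℝ) • T ^ n := expSeries_summable' (𝕂 := ℝ) T
  have happ : exp T Z = ∑' n : ℕ, (n.factorial⁻¹ : ℝ) • (T ^ n) Z := by
    have h1 : exp T = ∑' n : ℕ, (n.factorial⁻¹ : ℝ) • T ^ n := by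
      rw [exp_eq_tsum ℝ]
    rw [h1]
    have := (ContinuousLinearMap.apply ℝ 𝔸 Z).map_tsum hsum
    simpa using this
  have hsum2 : Summable fun n : ℕ => (n.factorial⁻¹ : ℝ) • (T ^ n) Z := by
    have := hsum.map (ContinuousLinearMap.apply ℝ 𝔸 Z) (ContinuousLinearMap.apply ℝ 𝔸 Z).continuous
    exact this
  set c : 𝔸 →L[ℝ] 𝔸 :=
    (ContinuousLinearMap.mul ℝ 𝔸).flip B - ContinuousLinearMap.mul ℝ 𝔸 B with hc
  have hcapp : ∀ X : 𝔸, c X = X * B - B * X := by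
    intro X
    simp [hc, ContinuousLinearMap.mul_apply', ContinuousLinearMap.flip_apply]
  have hzero : c (exp T Z) = 0 := by
    rw [happ, c.map_tsum hsum2]
    have : ∀ n : ℕ, c ((n.factorial⁻¹ : ℝ) • (T ^ n) Z) = 0 := fun n => by
      rw [hcapp]; exact hTZB n
    simp only [this, tsum_zero]
  have hconj : exp T Z = exp (s • A) * Z * exp (-(s • A)) := conj_exp_apply (s • A) Z
  rw [hconj, hcapp] at hzero
  exact hzero

/-- A function vanishing on `[0,∞)` has vanishing derivative there. -/
theorem deriv_zero_of_Ici {E : Type*} [NormedAddCommGroup E] [NormedSpace ℝ E] {f f' : ℝ → E}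
    (hd : ∀ s, HasDerivAt f (f' s) s) (h0 : ∀ s, 0 ≤ s → f s = 0) : ∀ s, 0 ≤ s → f' s = 0 := by
  intro s hs
  have h1 : HasDerivWithinAt f (f' s) (Set.Ici 0) s := (hd s).hasDerivWithinAt
  have h2 : HasDerivWithinAt f 0 (Set.Ici 0) s :=
    (hasDerivWithinAt_const s _ (0 : E)).congr (fun y hy => h0 y hy) (h0 s hs)
  have hu := uniqueDiffOn_Ici (0 : ℝ) s hs
  rw [← h1.derivWithin hu, h2.derivWithin hu]

theorem hasDerivAt_exp_aux (M : 𝔸) (c t : ℝ) :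
    HasDerivAt (fun t : ℝ => exp ((c * t) • M)) (c • (exp ((c * t) • M) * M)) t := by
  have h1 : HasDerivAt (fun u : ℝ => exp (u • M)) (exp ((c * t) • M) * M) (c * t) :=
    hasDerivAt_exp_smul_const M (c * t)
  have h2 : HasDerivAt (fun u : ℝ => c * u) c t := by
    simpa using (hasDerivAt_id t).const_mul c
  simpa [Function.comp_def] using HasDerivAt.scomp t h1 h2

theorem commute_adIt_of_conj (A B Z : 𝔸)
    (h : ∀ s : ℝ, 0 ≤ s →
      Z * (exp (s • (-A)) * B * exp (s • A)) - (exp (s • (-A)) * B * exp (s • A)) * Z = 0) :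
    ∀ n, Z * adIt A B n - adIt A B n * Z = 0 := by
  have main : ∀ n, ∀ s : ℝ, 0 ≤ s →
      Z * (exp (s • (-A)) * adIt A B n * exp (s • A))
        - (exp (s • (-A)) * adIt A B n * exp (s • A)) * Z = 0 := by
    intro n
    induction n with
    | zero => exact h
    | succ n ih =>
      have hG : ∀ s : ℝ,
          HasDerivAt (fun s : ℝ => exp (s • (-A)) * adIt A B n * exp (s • A))
            (exp (s • (-A)) * adIt A B (n + 1) * exp (s • A)) s := by
        intro s
        have h1 : HasDerivAt (fun s : ℝ => exp (s • (-A))) (exp (s • (-A)) * (-A)) s :=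
          hasDerivAt_exp_smul_const (-A) s
        have h2 : HasDerivAt (fun s : ℝ => exp (s • A)) (exp (s • A) * A) s :=
          hasDerivAt_exp_smul_const A s
        have hd := (h1.mul_const (adIt A B n)).mul h2
        convert hd using 1
        rfl
        have hcA : A * exp (s • A) = exp (s • A) * A :=
          (((Commute.refl A).smul_right s).exp_right).eq
        show exp (s • (-A)) * (adIt A B n * A - A * adIt A B n) * exp (s • A) = _
        rw [← hcA]
        noncomm_ring
      have hf : ∀ s, HasDerivAt
          (fun s : ℝ => Z * (exp (s • (-A)) * adIt A B n * exp (s • A))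
            - (exp (s • (-A)) * adIt A B n * exp (s • A)) * Z)
          (Z * (exp (s • (-A)) * adIt A B (n + 1) * exp (s • A))
            - (exp (s • (-A)) * adIt A B (n + 1) * exp (s • A)) * Z) s :=
        fun s => ((hG s).const_mul Z).sub ((hG s).mul_const Z)
      exact deriv_zero_of_Ici hf ih
  intro n
  have := main n 0 le_rfl
  simpa [exp_zero] using this

end Banach

end Stmt11Aux

open Stmt11Aux

/-- Let `A, V, Z, C ∈ M_m(ℝ)` with `C` invertible and set
`L(t) = exp(−A·t/2)·C·exp(V·t/2)` (so that `L(2t) = exp(−At)·C·exp(Vt)`).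
Then `[Z, L(t)C⁻¹] = 0` for all `t ≥ 0` iff `{Z A^(n) (CVC⁻¹ − A)} = 0` for all `n ≥ 0`. -/
theorem stmt_11 {m : ℕ} (A V Z C : Matrix (Fin m) (Fin m) ℝ) (hC : IsUnit C)
    (L : ℝ → Matrix (Fin m) (Fin m) ℝ)
    (hL : ∀ t : ℝ, L t = exp ((-(t / 2)) • A) * C * exp ((t / 2) • V)) :
    (∀ t : ℝ, 0 ≤ t → Z * (L t * C⁻¹) - (L t * C⁻¹) * Z = 0) ↔
      (∀ n : ℕ, itComm Z A n * (C * V * C⁻¹ - A) - (C * V * C⁻¹ - A) * itComm Z A n = 0) := by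
  letI : SeminormedRing (Matrix (Fin m) (Fin m) ℝ) := Matrix.linftyOpSemiNormedRing
  letI : NormedRing (Matrix (Fin m) (Fin m) ℝ) := Matrix.linftyOpNormedRing
  letI : NormedAlgebra ℝ (Matrix (Fin m) (Fin m) ℝ) := Matrix.linftyOpNormedAlgebra
  set W := C * V * C⁻¹ with hWdef
  set B := W - A with hBdef
  -- commutation facts
  have hcA : ∀ c : ℝ, A * exp (c • A) = exp (c • A) * A := fun c =>
    (((Commute.refl A).smul_right c).exp_right).eq
  have hcW : ∀ c : ℝ, W * exp (c • W) = exp (c • W) * W := fun c =>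
    (((Commute.refl W).smul_right c).exp_right).eq
  -- L t C⁻¹ in normalized form
  have hLC : ∀ t : ℝ, L t * C⁻¹
      = exp ((2⁻¹ * t) • (-A)) * exp ((2⁻¹ * t) • W) := by
    intro t
    rw [hL t]
    have e1 : ((-(t / 2)) : ℝ) • A = ((2⁻¹ * t) : ℝ) • (-A) := by
      rw [smul_neg, neg_smul, div_eq_inv_mul]
    have e2 : C * (exp ((t / 2) • V) * C⁻¹) = exp ((2⁻¹ * t) • W) := by
      rw [← mul_assoc, ← Matrix.exp_conj C ((t / 2) • V) hC]
      congr 1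
      rw [mul_smul_comm, smul_mul_assoc, div_eq_inv_mul, hWdef]
    rw [e1, mul_assoc, mul_assoc, e2]
  set F : ℝ → Matrix (Fin m) (Fin m) ℝ := fun t => exp ((2⁻¹ * t) • (-A)) * exp ((2⁻¹ * t) • W) with hFdef
  constructor
  · -- forward direction
    intro h n
    replace h : ∀ t : ℝ, 0 ≤ t → Z * F t - F t * Z = 0 := by
      intro t ht
      have := h t ht
      rwa [hLC t] at this
    -- derivative of F
    have hE1 : ∀ t : ℝ, HasDerivAt (fun t : ℝ => exp ((2⁻¹ * t) • (-A)))
        ((2⁻¹ : ℝ) • (exp ((2⁻¹ * t) • (-A)) * (-A))) t := fun t => hasDerivAt_exp_aux (-A) 2⁻¹ t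
    have hE2 : ∀ t : ℝ, HasDerivAt (fun t : ℝ => exp ((2⁻¹ * t) • W))
        ((2⁻¹ : ℝ) • (exp ((2⁻¹ * t) • W) * W)) t := fun t => hasDerivAt_exp_aux W 2⁻¹ t
    have hF : ∀ t : ℝ, HasDerivAt F
        ((2⁻¹ : ℝ) • (exp ((2⁻¹ * t) • (-A)) * B * exp ((2⁻¹ * t) • W))) t := by
      intro t
      have hd := (hE1 t).mul (hE2 t)
      convert hd using 1
      iterate 4 rfl
      rw [← hcW (2⁻¹ * t)]
      simp only [smul_mul_assoc, mul_smul_comm, ← smul_add]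
      congr 1
      rw [hBdef]
      noncomm_ring
    have hder := deriv_zero_of_Ici
      (fun t => ((hF t).const_mul Z).sub ((hF t).mul_const Z)) h
    have hstep1 : ∀ t : ℝ, 0 ≤ t →
        Z * (exp ((2⁻¹ * t) • (-A)) * B * exp ((2⁻¹ * t) • W))
          - (exp ((2⁻¹ * t) • (-A)) * B * exp ((2⁻¹ * t) • W)) * Z = 0 := by
      intro t ht
      have h1 := hder t ht
      rw [mul_smul_comm, smul_mul_assoc, ← smul_sub, smul_eq_zero] at h1
      rcases h1 with h1 | h1
      · norm_num at h1
      · exact h1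
    have hGF : ∀ t : ℝ,
        exp ((2⁻¹ * t) • (-A)) * B * exp ((2⁻¹ * t) • W)
          = (exp ((2⁻¹ * t) • (-A)) * B * exp ((2⁻¹ * t) • A)) * F t := by
      intro t
      have hid : exp ((2⁻¹ * t) • A) * exp ((2⁻¹ * t) • (-A)) = 1 := by
        rw [smul_neg]; exact exp_mul_exp_neg _
      rw [hFdef]
      simp only [← mul_assoc]
      rw [mul_assoc _ (exp ((2⁻¹ * t) • A)) (exp ((2⁻¹ * t) • (-A))), hid, mul_one]
    have hstep2 : ∀ t : ℝ, 0 ≤ t →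
        Z * (exp ((2⁻¹ * t) • (-A)) * B * exp ((2⁻¹ * t) • A))
          - (exp ((2⁻¹ * t) • (-A)) * B * exp ((2⁻¹ * t) • A)) * Z = 0 := by
      intro t ht
      set G := exp ((2⁻¹ * t) • (-A)) * B * exp ((2⁻¹ * t) • A) with hGdef
      have h1 := hstep1 t ht
      rw [hGF t] at h1
      have e1 : Z * (G * F t) = G * F t * Z := sub_eq_zero.mp h1
      have e2 : Z * F t = F t * Z := sub_eq_zero.mp (h t ht)
      have h3 : (Z * G - G * Z) * F t = 0 := by
        have hr : Z * (G * F t) - G * (Z * F t) = (Z * G - G * Z) * F t := by noncomm_ring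
        rw [← hr, e2, e1, mul_assoc, sub_self]
      have hFinv : F t * (exp ((2⁻¹ * t) • (-W)) * exp ((2⁻¹ * t) • A)) = 1 := by
        have i1 : exp ((2⁻¹ * t) • W) * exp ((2⁻¹ * t) • (-W)) = 1 := by
          rw [smul_neg]; exact exp_mul_exp_neg _
        have i2 : exp ((2⁻¹ * t) • (-A)) * exp ((2⁻¹ * t) • A) = 1 := by
          rw [smul_neg]; exact exp_neg_mul_exp _
        rw [hFdef]
        simp only [← mul_assoc]
        rw [mul_assoc (exp ((2⁻¹ * t) • (-A))) (exp ((2⁻¹ * t) • W))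
          (exp ((2⁻¹ * t) • (-W))), i1, mul_one, i2]
      have h4 := congrArg (· * (exp ((2⁻¹ * t) • (-W)) * exp ((2⁻¹ * t) • A))) h3
      simp only [zero_mul] at h4
      rw [mul_assoc, hFinv, mul_one] at h4
      exact h4
    have hconj : ∀ s : ℝ, 0 ≤ s →
        Z * (exp (s • (-A)) * B * exp (s • A))
          - (exp (s • (-A)) * B * exp (s • A)) * Z = 0 := by
      intro s hs
      have := hstep2 (2 * s) (by linarith)
      have ea : ((2⁻¹ * (2 * s)) : ℝ) • A = s • A := by
        congr 1; ring
      have eb : ((2⁻¹ * (2 * s)) : ℝ) • (-A) = s • (-A) := by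
        congr 1; ring
      rwa [ea, eb] at this
    have had := commute_adIt_of_conj A B Z hconj
    rw [itComm_eq_adIt]
    exact shuffle A Z n B had
  · -- converse direction
    intro h t _
    rw [hLC t]
    have hB : ∀ n, adIt A Z n * B - B * adIt A Z n = 0 := fun n => by
      rw [← itComm_eq_adIt]; exact h n
    have hP : ∀ s : ℝ,
        (exp (s • A) * Z * exp (-(s • A))) * B
          - B * (exp (s • A) * Z * exp (-(s • A))) = 0 := lemma1 A B Z hB
    set k : ℝ → Matrix (Fin m) (Fin m) ℝ := fun t =>
      exp ((2⁻¹ * t) • (-W)) * (exp ((2⁻¹ * t) • A) * Z * exp ((2⁻¹ * t) • (-A)))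
        * exp ((2⁻¹ * t) • W) with hkdef
    have hkd : ∀ u : ℝ, HasDerivAt k 0 u := by
      intro u
      set p : ℝ → Matrix (Fin m) (Fin m) ℝ := fun t => exp ((2⁻¹ * t) • A) * Z * exp ((2⁻¹ * t) • (-A)) with hpdef
      have hp : HasDerivAt p ((2⁻¹ : ℝ) • (A * p u - p u * A)) u := by
        have hd := ((hasDerivAt_exp_aux A 2⁻¹ u).mul_const Z).mul (hasDerivAt_exp_aux (-A) 2⁻¹ u)
        convert hd using 1
        iterate 4 rfl
        rw [hpdef]
        simp only []
        erw [← hcA (2⁻¹ * u)]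
        simp only [smul_mul_assoc, mul_smul_comm, ← smul_add]
        congr 1
        noncomm_ring
      have hpB : p u * B - B * p u = 0 := by
        have := hP (2⁻¹ * u)
        rw [hpdef]
        simp only []
        rw [show ((2⁻¹ * u) : ℝ) • (-A) = -(((2⁻¹ * u) : ℝ) • A) from smul_neg _ _]
        exact this
      have hk0 : HasDerivAt k
          ((2⁻¹ : ℝ) • (exp ((2⁻¹ * u) • (-W)) * (p u * B - B * p u)
            * exp ((2⁻¹ * u) • W))) u := by
        have hd := ((show HasDerivAt (fun t : ℝ => exp ((2⁻¹ * t) • (-W)))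
          ((2⁻¹ : ℝ) • (exp ((2⁻¹ * u) • (-W)) * (-W))) u from hasDerivAt_exp_aux (-W) 2⁻¹ u).mul hp).mul
          (show HasDerivAt (fun t : ℝ => exp ((2⁻¹ * t) • W))
          ((2⁻¹ : ℝ) • (exp ((2⁻¹ * u) • W) * W)) u from hasDerivAt_exp_aux W 2⁻¹ u)
        convert hd using 1
        iterate 4 rfl
        simp only [Pi.mul_apply]
        rw [← hcW (2⁻¹ * u), hBdef]
        simp only [smul_mul_assoc, mul_smul_comm, ← smul_add]
        congr 1
        noncomm_ring
      rw [hpB] at hk0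
      simpa using hk0
    have hconst : ∀ u : ℝ, k u = k 0 := fun u =>
      is_const_of_deriv_eq_zero (fun x => (hkd x).differentiableAt) (fun x => (hkd x).deriv) u 0
    have hk0 : k 0 = Z := by
      rw [hkdef]
      simp only [mul_zero, zero_smul, exp_zero, one_mul, mul_one]
    have hkt : k t = Z := (hconst t).trans hk0
    have i1 : exp ((2⁻¹ * t) • W) * exp ((2⁻¹ * t) • (-W)) = 1 := by
      rw [smul_neg]; exact exp_mul_exp_neg _
    have i2 : exp ((2⁻¹ * t) • (-A)) * exp ((2⁻¹ * t) • A) = 1 := by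
      rw [smul_neg]; exact exp_neg_mul_exp _
    have e3 : (exp ((2⁻¹ * t) • (-A)) * exp ((2⁻¹ * t) • W)) * Z
        = Z * (exp ((2⁻¹ * t) • (-A)) * exp ((2⁻¹ * t) • W)) := by
      conv_lhs => rw [← hkt]
      rw [hkdef]
      simp only [← mul_assoc]
      rw [mul_assoc (exp ((2⁻¹ * t) • (-A))) (exp ((2⁻¹ * t) • W))
        (exp ((2⁻¹ * t) • (-W))), i1, mul_one, i2, one_mul]
    rw [sub_eq_zero]
    exact e3.symm
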